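/- The sectional curvature of the coordinate plane spanned by ∂/∂α₁ and ∂/∂α₂ in the Freund manifold with its Fisher metric and Levi-Civita connection is identically zero. -/

import Mathlib

open Real

/-- Entries of the Fisher information metric of the Freund manifold, as
functions of the point `p = (α₁, β₁, α₂, β₂)` in `(0,∞)⁴`. -/
noncomputable def metF (i j : Fin 4) (p : Fin 4 → ℝ) : ℝ :=
  Matrix.diagonal
    ![1 / ((p 0) ^ 2 + p 0 * p 2),
      p 2 / ((p 1) ^ 2 * (p 0 + p 2)),
      1 / ((p 2) ^ 2 + p 0 * p 2),
      p 0 / ((p 3) ^ 2 * (p 0 + p 2))] i j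

/-- The metric as a matrix at `p`. -/
noncomputable def metM (p : Fin 4 → ℝ) : Matrix (Fin 4) (Fin 4) ℝ :=
  fun i j => metF i j p

/-- Partial derivative in the `i`-th coordinate. -/
noncomputable def pd (i : Fin 4) (F : (Fin 4 → ℝ) → ℝ) (p : Fin 4 → ℝ) : ℝ :=
  deriv (fun t => F (Function.update p i t)) (p i)

/-- Levi-Civita Christoffel symbols of the first kind. -/
noncomputable def lcLow (i j k : Fin 4) (p : Fin 4 → ℝ) : ℝ :=
  (pd i (metF j k) p + pd j (metF i k) p - pd k (metF i j) p) / 2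

/-- Levi-Civita Christoffel symbols of the second kind. -/
noncomputable def lcUp (h i j : Fin 4) (p : Fin 4 → ℝ) : ℝ :=
  ∑ k : Fin 4, (metM p)⁻¹ h k * lcLow i j k p

/-- Riemann curvature tensor `R^h_{ijk}` of the Levi-Civita connection. -/
noncomputable def riem (h i j k : Fin 4) (p : Fin 4 → ℝ) : ℝ :=
  pd i (lcUp h j k) p - pd j (lcUp h i k) p +
    ∑ l : Fin 4, (lcUp h i l p * lcUp l j k p - lcUp h j l p * lcUp l i k p)

/-- Sectional curvature of the coordinate 2-plane spanned by `∂_i` and `∂_j`. -/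
noncomputable def sec (i j : Fin 4) (p : Fin 4 → ℝ) : ℝ :=
  (∑ l : Fin 4, metF i l p * riem l i j j p) /
    (metF i i p * metF j j p - (metF i j p) ^ 2)

/-! ### Auxiliary lemmas -/

lemma metM_inv (q : Fin 4 → ℝ) (hq : ∀ i, 0 < q i) :
    (metM q)⁻¹ = Matrix.diagonal ![q 0 ^ 2 + q 0 * q 2, q 1 ^ 2 * (q 0 + q 2) / q 2,
      q 2 ^ 2 + q 0 * q 2, q 3 ^ 2 * (q 0 + q 2) / q 0] := by
  have h0 := hq 0; have h1 := hq 1; have h2 := hq 2; have h3 := hq 3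
  have n0 : q 0 ≠ 0 := h0.ne'
  have n1 : q 1 ≠ 0 := h1.ne'
  have n2 : q 2 ≠ 0 := h2.ne'
  have n3 : q 3 ≠ 0 := h3.ne'
  have nS : q 0 + q 2 ≠ 0 := by positivity
  have nA : q 0 ^ 2 + q 0 * q 2 ≠ 0 := by positivity
  have nC : q 2 ^ 2 + q 0 * q 2 ≠ 0 := by positivity
  apply Matrix.inv_eq_right_inv
  rw [show metM q = Matrix.diagonal ![1 / ((q 0) ^ 2 + q 0 * q 2),
      q 2 / ((q 1) ^ 2 * (q 0 + q 2)),
      1 / ((q 2) ^ 2 + q 0 * q 2),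
      q 0 / ((q 3) ^ 2 * (q 0 + q 2))] from rfl, Matrix.diagonal_mul_diagonal]
  have hv : (fun i => ![1 / ((q 0) ^ 2 + q 0 * q 2),
      q 2 / ((q 1) ^ 2 * (q 0 + q 2)),
      1 / ((q 2) ^ 2 + q 0 * q 2),
      q 0 / ((q 3) ^ 2 * (q 0 + q 2))] i * ![q 0 ^ 2 + q 0 * q 2, q 1 ^ 2 * (q 0 + q 2) / q 2,
      q 2 ^ 2 + q 0 * q 2, q 3 ^ 2 * (q 0 + q 2) / q 0] i) = fun _ => (1:ℝ) := by
    funext i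
    fin_cases i <;> simp <;> field_simp
  rw [hv, show (Matrix.diagonal (fun _ => (1:ℝ)) : Matrix (Fin 4) (Fin 4) ℝ) = 1 by
    rw [← Matrix.diagonal_one]]

/-! Partial derivatives of metric components. -/

lemma pd_offdiag (i j k : Fin 4) (hij : i ≠ j) (q : Fin 4 → ℝ) :
    pd k (metF i j) q = 0 := by
  have hfun : (fun t => metF i j (Function.update q k t)) = fun _ => (0:ℝ) := by
    funext t; simp [metF, Matrix.diagonal_apply_ne _ hij]
  rw [pd, hfun, deriv_const]

lemma pd_m02 (k : Fin 4) (q : Fin 4 → ℝ) : pd k (metF 0 2) q = 0 :=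
  pd_offdiag _ _ _ (by decide) q
lemma pd_m20 (k : Fin 4) (q : Fin 4 → ℝ) : pd k (metF 2 0) q = 0 :=
  pd_offdiag _ _ _ (by decide) q
lemma pd_m01 (k : Fin 4) (q : Fin 4 → ℝ) : pd k (metF 0 1) q = 0 :=
  pd_offdiag _ _ _ (by decide) q
lemma pd_m10 (k : Fin 4) (q : Fin 4 → ℝ) : pd k (metF 1 0) q = 0 :=
  pd_offdiag _ _ _ (by decide) q
lemma pd_m21 (k : Fin 4) (q : Fin 4 → ℝ) : pd k (metF 2 1) q = 0 :=
  pd_offdiag _ _ _ (by decide) q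
lemma pd_m12 (k : Fin 4) (q : Fin 4 → ℝ) : pd k (metF 1 2) q = 0 :=
  pd_offdiag _ _ _ (by decide) q
lemma pd_m03 (k : Fin 4) (q : Fin 4 → ℝ) : pd k (metF 0 3) q = 0 :=
  pd_offdiag _ _ _ (by decide) q
lemma pd_m30 (k : Fin 4) (q : Fin 4 → ℝ) : pd k (metF 3 0) q = 0 :=
  pd_offdiag _ _ _ (by decide) q
lemma pd_m23 (k : Fin 4) (q : Fin 4 → ℝ) : pd k (metF 2 3) q = 0 :=
  pd_offdiag _ _ _ (by decide) q
lemma pd_m32 (k : Fin 4) (q : Fin 4 → ℝ) : pd k (metF 3 2) q = 0 :=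
  pd_offdiag _ _ _ (by decide) q
lemma pd_m13 (k : Fin 4) (q : Fin 4 → ℝ) : pd k (metF 1 3) q = 0 :=
  pd_offdiag _ _ _ (by decide) q
lemma pd_m31 (k : Fin 4) (q : Fin 4 → ℝ) : pd k (metF 3 1) q = 0 :=
  pd_offdiag _ _ _ (by decide) q

lemma pd1_m22 (q : Fin 4 → ℝ) : pd 1 (metF 2 2) q = 0 := by
  have hfun : (fun t => metF 2 2 (Function.update q 1 t)) =
      fun _ => 1 / (q 2 ^ 2 + q 0 * q 2) := by
    funext t; simp [metF, Matrix.diagonal, Function.update]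
  rw [pd, hfun, deriv_const]

lemma pd3_m22 (q : Fin 4 → ℝ) : pd 3 (metF 2 2) q = 0 := by
  have hfun : (fun t => metF 2 2 (Function.update q 3 t)) =
      fun _ => 1 / (q 2 ^ 2 + q 0 * q 2) := by
    funext t; simp [metF, Matrix.diagonal, Function.update]
  rw [pd, hfun, deriv_const]

lemma pd0_m00 (q : Fin 4 → ℝ) (h : q 0 ^ 2 + q 0 * q 2 ≠ 0) :
    pd 0 (metF 0 0) q = -(2 * q 0 + q 2) / (q 0 ^ 2 + q 0 * q 2) ^ 2 := by
  have hd : HasDerivAt (fun t : ℝ => t ^ 2 + t * q 2) (2 * q 0 + q 2) (q 0) := by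
    simpa using (hasDerivAt_pow 2 (q 0)).fun_add ((hasDerivAt_id (q 0)).mul_const (q 2))
  have hfun : (fun t => metF 0 0 (Function.update q 0 t)) = fun t => (t ^ 2 + t * q 2)⁻¹ := by
    funext t; simp [metF, Matrix.diagonal, Function.update, one_div]
  rw [pd, hfun, (hd.fun_inv h).deriv]

lemma pd2_m00 (q : Fin 4 → ℝ) (h : q 0 ^ 2 + q 0 * q 2 ≠ 0) :
    pd 2 (metF 0 0) q = -(q 0) / (q 0 ^ 2 + q 0 * q 2) ^ 2 := by
  have hd : HasDerivAt (fun t : ℝ => q 0 ^ 2 + q 0 * t) (q 0) (q 2) := by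
    simpa using (hasDerivAt_const (q 2) ((q 0) ^ 2)).fun_add ((hasDerivAt_id (q 2)).const_mul (q 0))
  have hfun : (fun t => metF 0 0 (Function.update q 2 t)) = fun t => (q 0 ^ 2 + q 0 * t)⁻¹ := by
    funext t; simp [metF, Matrix.diagonal, Function.update, one_div]
  rw [pd, hfun, (hd.fun_inv h).deriv]

lemma pd0_m22 (q : Fin 4 → ℝ) (h : q 2 ^ 2 + q 0 * q 2 ≠ 0) :
    pd 0 (metF 2 2) q = -(q 2) / (q 2 ^ 2 + q 0 * q 2) ^ 2 := by
  have hd : HasDerivAt (fun t : ℝ => q 2 ^ 2 + t * q 2) (q 2) (q 0) := by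
    simpa using (hasDerivAt_const (q 0) ((q 2) ^ 2)).fun_add ((hasDerivAt_id (q 0)).mul_const (q 2))
  have hfun : (fun t => metF 2 2 (Function.update q 0 t)) = fun t => (q 2 ^ 2 + t * q 2)⁻¹ := by
    funext t; simp [metF, Matrix.diagonal, Function.update, one_div]
  rw [pd, hfun, (hd.fun_inv h).deriv]

lemma pd2_m22 (q : Fin 4 → ℝ) (h : q 2 ^ 2 + q 0 * q 2 ≠ 0) :
    pd 2 (metF 2 2) q = -(2 * q 2 + q 0) / (q 2 ^ 2 + q 0 * q 2) ^ 2 := by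
  have hd : HasDerivAt (fun t : ℝ => t ^ 2 + q 0 * t) (2 * q 2 + q 0) (q 2) := by
    simpa using (hasDerivAt_pow 2 (q 2)).fun_add ((hasDerivAt_id (q 2)).const_mul (q 0))
  have hfun : (fun t => metF 2 2 (Function.update q 2 t)) = fun t => (t ^ 2 + q 0 * t)⁻¹ := by
    funext t; simp [metF, Matrix.diagonal, Function.update, one_div]
  rw [pd, hfun, (hd.fun_inv h).deriv]

/-! Christoffel symbols of the second kind. -/


lemma lcUp_022 (q : Fin 4 → ℝ) (hq : ∀ i, 0 < q i) :
    lcUp 0 2 2 q = q 0 / (2 * q 2 * (q 0 + q 2)) := by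
  have h0 := hq 0; have h2 := hq 2
  have nS : q 0 + q 2 ≠ 0 := by positivity
  have nC : q 2 ^ 2 + q 0 * q 2 ≠ 0 := by positivity
  rw [lcUp, metM_inv q hq, Fin.sum_univ_four]
  simp [Matrix.diagonal_apply_ne, Matrix.diagonal_apply_eq, lcLow,
    pd_m02, pd_m20, pd_m21, pd_m23, pd0_m22 q nC]
  field_simp
  ring

lemma lcUp_002 (q : Fin 4 → ℝ) (hq : ∀ i, 0 < q i) :
    lcUp 0 0 2 q = -(1 / (2 * (q 0 + q 2))) := by
  have h0 := hq 0; have h2 := hq 2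
  have nS : q 0 + q 2 ≠ 0 := by positivity
  have nA : q 0 ^ 2 + q 0 * q 2 ≠ 0 := by positivity
  rw [lcUp, metM_inv q hq, Fin.sum_univ_four]
  simp [Matrix.diagonal_apply_ne, Matrix.diagonal_apply_eq, lcLow,
    pd_m02, pd_m20, pd2_m00 q nA]
  field_simp

lemma lcUp_020 (q : Fin 4 → ℝ) (hq : ∀ i, 0 < q i) :
    lcUp 0 2 0 q = -(1 / (2 * (q 0 + q 2))) := by
  have h0 := hq 0; have h2 := hq 2
  have nS : q 0 + q 2 ≠ 0 := by positivity
  have nA : q 0 ^ 2 + q 0 * q 2 ≠ 0 := by positivity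
  rw [lcUp, metM_inv q hq, Fin.sum_univ_four]
  simp [Matrix.diagonal_apply_ne, Matrix.diagonal_apply_eq, lcLow,
    pd_m02, pd_m20, pd2_m00 q nA]
  field_simp

lemma lcUp_000 (q : Fin 4 → ℝ) (hq : ∀ i, 0 < q i) :
    lcUp 0 0 0 q = -(2 * q 0 + q 2) / (2 * q 0 * (q 0 + q 2)) := by
  have h0 := hq 0; have h2 := hq 2
  have nS : q 0 + q 2 ≠ 0 := by positivity
  have nA : q 0 ^ 2 + q 0 * q 2 ≠ 0 := by positivity
  rw [lcUp, metM_inv q hq, Fin.sum_univ_four]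
  simp [Matrix.diagonal_apply_ne, Matrix.diagonal_apply_eq, lcLow, pd0_m00 q nA]
  field_simp

lemma lcUp_222 (q : Fin 4 → ℝ) (hq : ∀ i, 0 < q i) :
    lcUp 2 2 2 q = -(2 * q 2 + q 0) / (2 * q 2 * (q 0 + q 2)) := by
  have h0 := hq 0; have h2 := hq 2
  have nS : q 0 + q 2 ≠ 0 := by positivity
  have nC : q 2 ^ 2 + q 0 * q 2 ≠ 0 := by positivity
  rw [lcUp, metM_inv q hq, Fin.sum_univ_four]
  simp [Matrix.diagonal_apply_ne, Matrix.diagonal_apply_eq, lcLow, pd2_m22 q nC]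
  field_simp
  ring

lemma lcUp_202 (q : Fin 4 → ℝ) (hq : ∀ i, 0 < q i) :
    lcUp 2 0 2 q = -(1 / (2 * (q 0 + q 2))) := by
  have h0 := hq 0; have h2 := hq 2
  have nS : q 0 + q 2 ≠ 0 := by positivity
  have nC : q 2 ^ 2 + q 0 * q 2 ≠ 0 := by positivity
  rw [lcUp, metM_inv q hq, Fin.sum_univ_four]
  simp [Matrix.diagonal_apply_ne, Matrix.diagonal_apply_eq, lcLow,
    pd_m02, pd_m20, pd0_m22 q nC]
  field_simp
  ring

lemma lcUp_122 (q : Fin 4 → ℝ) (hq : ∀ i, 0 < q i) : lcUp 1 2 2 q = 0 := by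
  rw [lcUp, metM_inv q hq, Fin.sum_univ_four]
  simp [Matrix.diagonal_apply_ne, Matrix.diagonal_apply_eq, lcLow, pd_m21, pd1_m22]

lemma lcUp_102 (q : Fin 4 → ℝ) (hq : ∀ i, 0 < q i) : lcUp 1 0 2 q = 0 := by
  rw [lcUp, metM_inv q hq, Fin.sum_univ_four]
  simp [Matrix.diagonal_apply_ne, Matrix.diagonal_apply_eq, lcLow,
    pd_m21, pd_m01, pd_m02]

lemma lcUp_322 (q : Fin 4 → ℝ) (hq : ∀ i, 0 < q i) : lcUp 3 2 2 q = 0 := by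
  rw [lcUp, metM_inv q hq, Fin.sum_univ_four]
  simp [Matrix.diagonal_apply_ne, Matrix.diagonal_apply_eq, lcLow, pd_m23, pd3_m22]

lemma lcUp_302 (q : Fin 4 → ℝ) (hq : ∀ i, 0 < q i) : lcUp 3 0 2 q = 0 := by
  rw [lcUp, metM_inv q hq, Fin.sum_univ_four]
  simp [Matrix.diagonal_apply_ne, Matrix.diagonal_apply_eq, lcLow,
    pd_m23, pd_m03, pd_m02]


/-! Partial derivatives of Christoffel symbols. -/

lemma pd0_lcUp022 (p : Fin 4 → ℝ) (hp : ∀ i, 0 < p i) :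
    pd 0 (lcUp 0 2 2) p = 1 / (2 * (p 0 + p 2) ^ 2) := by
  have h0 := hp 0; have h2 := hp 2
  have hev : (fun t => lcUp 0 2 2 (Function.update p 0 t)) =ᶠ[nhds (p 0)]
      fun t => t / (2 * p 2 * (t + p 2)) := by
    filter_upwards [isOpen_Ioi.mem_nhds (show p 0 ∈ Set.Ioi (0:ℝ) from h0)] with t ht
    have hq : ∀ i, 0 < Function.update p 0 t i := by
      intro i
      rcases eq_or_ne i 0 with rfl | h
      · simpa using ht
      · simpa [Function.update_of_ne h] using hp i
    rw [lcUp_022 _ hq]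
    simp [Function.update]
  rw [pd, hev.deriv_eq]
  have nd : 2 * p 2 * (p 0 + p 2) ≠ 0 := by positivity
  have hden : HasDerivAt (fun t : ℝ => 2 * p 2 * (t + p 2)) (2 * p 2) (p 0) := by
    simpa using ((hasDerivAt_id (p 0)).add_const (p 2)).const_mul (2 * p 2)
  have hd : HasDerivAt (fun t : ℝ => t / (2 * p 2 * (t + p 2)))
      ((1 * (2 * p 2 * (p 0 + p 2)) - p 0 * (2 * p 2)) / (2 * p 2 * (p 0 + p 2)) ^ 2) (p 0) :=
    (hasDerivAt_id (p 0)).div hden nd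
  rw [hd.deriv]
  field_simp
  ring

lemma pd2_lcUp002 (p : Fin 4 → ℝ) (hp : ∀ i, 0 < p i) :
    pd 2 (lcUp 0 0 2) p = 1 / (2 * (p 0 + p 2) ^ 2) := by
  have h0 := hp 0; have h2 := hp 2
  have hev : (fun t => lcUp 0 0 2 (Function.update p 2 t)) =ᶠ[nhds (p 2)]
      fun t => -(2 * (p 0 + t))⁻¹ := by
    filter_upwards [isOpen_Ioi.mem_nhds (show p 2 ∈ Set.Ioi (0:ℝ) from h2)] with t ht
    have hq : ∀ i, 0 < Function.update p 2 t i := by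
      intro i
      rcases eq_or_ne i 2 with rfl | h
      · simpa using ht
      · simpa [Function.update_of_ne h] using hp i
    rw [lcUp_002 _ hq]
    simp [Function.update, one_div]
  rw [pd, hev.deriv_eq]
  have nd : 2 * (p 0 + p 2) ≠ 0 := by positivity
  have hd : HasDerivAt (fun t : ℝ => 2 * (p 0 + t)) 2 (p 2) := by
    simpa using ((hasDerivAt_const (p 2) (p 0)).add (hasDerivAt_id (p 2))).const_mul (2:ℝ)
  rw [((hd.fun_inv nd).fun_neg).deriv]
  field_simp

/-- The sectional curvature of the `(α₁, α₂)` coordinate plane vanishes. -/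
theorem freund_sectional_alpha_plane (p : Fin 4 → ℝ) (hp : ∀ i, 0 < p i) :
    sec 0 2 p = 0 := by
  have h0 := hp 0; have h2 := hp 2
  have nS : p 0 + p 2 ≠ 0 := by positivity
  have key : riem 0 0 2 2 p = 0 := by
    rw [riem, Fin.sum_univ_four, pd0_lcUp022 p hp, pd2_lcUp002 p hp,
      lcUp_000 p hp, lcUp_002 p hp, lcUp_020 p hp, lcUp_022 p hp,
      lcUp_222 p hp, lcUp_202 p hp, lcUp_122 p hp, lcUp_102 p hp,
      lcUp_322 p hp, lcUp_302 p hp]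
    field_simp
    ring
  have m01 : metF 0 1 p = 0 := by simp [metF, Matrix.diagonal_apply_ne]
  have m02 : metF 0 2 p = 0 := by simp [metF, Matrix.diagonal_apply_ne]
  have m03 : metF 0 3 p = 0 := by simp [metF, Matrix.diagonal_apply_ne]
  rw [sec, Fin.sum_univ_four, key, m01, m02, m03]
  simp
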